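/- There exists s₀ such that for all integers s ≥ s₀ and every natural number l with l ≤ (ln s)/(6 ln 3), there is no (N, s+3, 2s+1)-suitable core with N = (s+3)(s−1) + l. -/

import Mathlib

/-- An `(N, w, t)`-suitable core: an `N × w` array whose rows are permutations of `{1,…,w}`
(row `i`, position `j` holds symbol `C i j`) such that for each `s` with `0 ≤ s ≤ t−1`,
each symbol precedes each set of `s` other symbols in at least `t − s` rows. -/
def IsSuitableCore (N w t : ℕ) (C : Fin N → Equiv.Perm (Fin w)) : Prop :=
  ∀ (σ : Fin w) (T : Finset (Fin w)), σ ∉ T → T.card < t →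
    t - T.card ≤ (Finset.univ.filter fun i : Fin N =>
      ∀ τ ∈ T, (C i).symm σ < (C i).symm τ).card

def SuitableCoreExists (N w t : ℕ) : Prop :=
  ∃ C : Fin N → Equiv.Perm (Fin w), IsSuitableCore N w t C

open Finset


private lemma fin3_cases (x : Fin 3) : x = 0 ∨ x = 1 ∨ x = 2 := by
  rcases x with ⟨v, hv⟩
  interval_cases v <;> simp [Fin.ext_iff]

/-- Three-colour Ramsey with explicit bound `3^(a+b+c)`. -/
theorem ramsey3 {α : Type*} [DecidableEq α] :
    ∀ (n a b c : ℕ), a + b + c = n → ∀ (Y : Finset α) (χ : α → α → Fin 3),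
    (∀ u v, χ u v = χ v u) → 3 ^ n ≤ Y.card →
    ∃ K : Finset α, K ⊆ Y ∧
      ((K.card = a ∧ ∀ u ∈ K, ∀ v ∈ K, u ≠ v → χ u v = 0) ∨
       (K.card = b ∧ ∀ u ∈ K, ∀ v ∈ K, u ≠ v → χ u v = 1) ∨
       (K.card = c ∧ ∀ u ∈ K, ∀ v ∈ K, u ≠ v → χ u v = 2)) := by
  intro n
  induction n with
  | zero =>
    intro a b c habc Y χ hsymm hY
    refine ⟨∅, empty_subset _, Or.inl ⟨?_, by simp⟩⟩
    simp; omega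
  | succ n ih =>
    intro a b c habc Y χ hsymm hY
    rcases Nat.eq_zero_or_pos a with ha | ha
    · exact ⟨∅, empty_subset _, Or.inl ⟨by simp [ha], by simp⟩⟩
    rcases Nat.eq_zero_or_pos b with hb | hb
    · exact ⟨∅, empty_subset _, Or.inr (Or.inl ⟨by simp [hb], by simp⟩)⟩
    rcases Nat.eq_zero_or_pos c with hc | hc
    · exact ⟨∅, empty_subset _, Or.inr (Or.inr ⟨by simp [hc], by simp⟩)⟩
    -- pick a vertex
    have hYne : Y.Nonempty := by
      rw [← card_pos]; calc (0:ℕ) < 3 ^ (n+1) := Nat.pow_pos (by norm_num)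
        _ ≤ Y.card := hY
    obtain ⟨v, hv⟩ := hYne
    set B : Fin 3 → Finset α := fun i => (Y.erase v).filter (fun u => χ v u = i) with hB
    have hcover : Y.erase v ⊆ B 0 ∪ B 1 ∪ B 2 := by
      intro u hu
      rcases fin3_cases (χ v u) with h | h | h <;>
        simp [hB, mem_union, mem_filter, hu, h]
    have hbig : ∃ i, 3 ^ n ≤ (B i).card := by
      by_contra hno
      push_neg at hno
      have h0 := hno 0; have h1 := hno 1; have h2 := hno 2
      have hle : (Y.erase v).card ≤ (B 0).card + (B 1).card + (B 2).card := by
        calc (Y.erase v).card ≤ (B 0 ∪ B 1 ∪ B 2).card := card_le_card hcover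
          _ ≤ (B 0 ∪ B 1).card + (B 2).card := card_union_le _ _
          _ ≤ (B 0).card + (B 1).card + (B 2).card :=
            Nat.add_le_add_right (card_union_le _ _) _
      have hec : Y.card - 1 ≤ (Y.erase v).card := by
        rw [card_erase_of_mem hv]
      have : 3 ^ (n+1) = 3 * 3 ^ n := by ring
      omega
    obtain ⟨i, hi⟩ := hbig
    have hBsubY : ∀ j, B j ⊆ Y := fun j => (filter_subset _ _).trans (erase_subset _ _)
    have hBe : ∀ j, B j ⊆ Y.erase v := fun j => filter_subset _ _
    have hchi : ∀ j, ∀ u ∈ B j, χ v u = j := by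
      intro j u hu; exact (mem_filter.mp hu).2
    rcases fin3_cases i with hi0 | hi0 | hi0 <;> subst hi0
    · -- decrement a
      obtain ⟨K, hKsub, hK⟩ := ih (a-1) b c (by omega) (B 0) χ hsymm hi
      rcases hK with ⟨hcard, hmono⟩ | ⟨hcard, hmono⟩ | ⟨hcard, hmono⟩
      · refine ⟨insert v K, ?_, Or.inl ⟨?_, ?_⟩⟩
        · exact insert_subset hv (hKsub.trans (hBsubY 0))
        · have hvK : v ∉ K := fun h => (notMem_erase v Y) (hBe 0 (hKsub h))
          rw [card_insert_of_notMem hvK, hcard]; omega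
        · intro u hu w hw huw
          rcases mem_insert.mp hu with h1 | h1
          · rcases mem_insert.mp hw with h2 | h2
            · exact absurd (h1.trans h2.symm) huw
            · rw [h1]; exact hchi 0 w (hKsub h2)
          · rcases mem_insert.mp hw with h2 | h2
            · rw [h2, hsymm]; exact hchi 0 u (hKsub h1)
            · exact hmono u h1 w h2 huw
      · exact ⟨K, hKsub.trans (hBsubY 0), Or.inr (Or.inl ⟨hcard, hmono⟩)⟩
      · exact ⟨K, hKsub.trans (hBsubY 0), Or.inr (Or.inr ⟨hcard, hmono⟩)⟩
    · -- decrement b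
      obtain ⟨K, hKsub, hK⟩ := ih a (b-1) c (by omega) (B 1) χ hsymm hi
      rcases hK with ⟨hcard, hmono⟩ | ⟨hcard, hmono⟩ | ⟨hcard, hmono⟩
      · exact ⟨K, hKsub.trans (hBsubY 1), Or.inl ⟨hcard, hmono⟩⟩
      · refine ⟨insert v K, ?_, Or.inr (Or.inl ⟨?_, ?_⟩)⟩
        · exact insert_subset hv (hKsub.trans (hBsubY 1))
        · have hvK : v ∉ K := fun h => (notMem_erase v Y) (hBe 1 (hKsub h))
          rw [card_insert_of_notMem hvK, hcard]; omega
        · intro u hu w hw huw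
          rcases mem_insert.mp hu with h1 | h1
          · rcases mem_insert.mp hw with h2 | h2
            · exact absurd (h1.trans h2.symm) huw
            · rw [h1]; exact hchi 1 w (hKsub h2)
          · rcases mem_insert.mp hw with h2 | h2
            · rw [h2, hsymm]; exact hchi 1 u (hKsub h1)
            · exact hmono u h1 w h2 huw
      · exact ⟨K, hKsub.trans (hBsubY 1), Or.inr (Or.inr ⟨hcard, hmono⟩)⟩
    · -- decrement c
      obtain ⟨K, hKsub, hK⟩ := ih a b (c-1) (by omega) (B 2) χ hsymm hi
      rcases hK with ⟨hcard, hmono⟩ | ⟨hcard, hmono⟩ | ⟨hcard, hmono⟩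
      · exact ⟨K, hKsub.trans (hBsubY 2), Or.inl ⟨hcard, hmono⟩⟩
      · exact ⟨K, hKsub.trans (hBsubY 2), Or.inr (Or.inl ⟨hcard, hmono⟩)⟩
      · refine ⟨insert v K, ?_, Or.inr (Or.inr ⟨?_, ?_⟩)⟩
        · exact insert_subset hv (hKsub.trans (hBsubY 2))
        · have hvK : v ∉ K := fun h => (notMem_erase v Y) (hBe 2 (hKsub h))
          rw [card_insert_of_notMem hvK, hcard]; omega
        · intro u hu w hw huw
          rcases mem_insert.mp hu with h1 | h1
          · rcases mem_insert.mp hw with h2 | h2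
            · exact absurd (h1.trans h2.symm) huw
            · rw [h1]; exact hchi 2 w (hKsub h2)
          · rcases mem_insert.mp hw with h2 | h2
            · rw [h2, hsymm]; exact hchi 2 u (hKsub h1)
            · exact hmono u h1 w h2 huw





theorem supersat {α : Type*} [DecidableEq α] (Y : Finset α) (R : ℕ) (hR : 2 ≤ R)
    (hmR : R ≤ Y.card) (Q : Finset (α × α))
    (hQ : ∀ q ∈ Q, q.1 ∈ Y ∧ q.2 ∈ Y ∧ q.1 ≠ q.2)
    (hcover : ∀ S, S ⊆ Y → S.card = R → ∃ q ∈ Q, q.1 ∈ S ∧ q.2 ∈ S) :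
    Y.card * (Y.card - 1) ≤ Q.card * (R * (R - 1)) := by
  classical
  set m := Y.card with hm
  set P := Y.powersetCard R with hP
  have hPcard : P.card = m.choose R := by
    rw [hP, card_powersetCard]
  -- step 1: each S in P contains a pair from Q
  have step1 : P.card ≤ ∑ S ∈ P, (Q.filter (fun q => q.1 ∈ S ∧ q.2 ∈ S)).card := by
    have : ∀ S ∈ P, 1 ≤ (Q.filter (fun q => q.1 ∈ S ∧ q.2 ∈ S)).card := by
      intro S hS
      rw [mem_powersetCard] at hS
      obtain ⟨q, hq, h1, h2⟩ := hcover S hS.1 hS.2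
      rw [Nat.succ_le_iff, card_pos]
      exact ⟨q, mem_filter.mpr ⟨hq, h1, h2⟩⟩
    calc P.card = ∑ _S ∈ P, 1 := by simp
      _ ≤ _ := Finset.sum_le_sum this
  -- step 2: swap the double counting
  have step2 : ∑ S ∈ P, (Q.filter (fun q => q.1 ∈ S ∧ q.2 ∈ S)).card
      = ∑ q ∈ Q, (P.filter (fun S => q.1 ∈ S ∧ q.2 ∈ S)).card := by
    simp only [card_filter]
    rw [Finset.sum_comm]
  -- step 3: each pair lies in at most choose (m-2) (R-2) sets of P
  have step3 : ∀ q ∈ Q, (P.filter (fun S => q.1 ∈ S ∧ q.2 ∈ S)).card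
      ≤ (m-2).choose (R-2) := by
    intro q hq
    obtain ⟨hq1, hq2, hne⟩ := hQ q hq
    have : ((Y.erase q.1).erase q.2).card = m - 2 := by
      rw [card_erase_of_mem (mem_erase.mpr ⟨hne.symm, hq2⟩), card_erase_of_mem hq1]
      omega
    calc (P.filter (fun S => q.1 ∈ S ∧ q.2 ∈ S)).card
        ≤ (((Y.erase q.1).erase q.2).powersetCard (R-2)).card := by
          apply Finset.card_le_card_of_injOn (fun S => (S.erase q.1).erase q.2)
          · intro S hS
            rw [mem_coe, mem_filter] at hS
            obtain ⟨hSP, hS1, hS2⟩ := hS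
            rw [mem_coe]; rw [mem_powersetCard] at hSP ⊢
            constructor
            · intro x hx
              rw [mem_erase] at hx ⊢
              refine ⟨hx.1, ?_⟩
              rw [mem_erase] at hx ⊢
              exact ⟨hx.2.1, hSP.1 hx.2.2⟩
            · rw [card_erase_of_mem (mem_erase.mpr ⟨hne.symm, hS2⟩),
                card_erase_of_mem hS1, hSP.2]
              omega
          · intro S1 hS1 S2 hS2 heq
            rw [mem_coe, mem_filter] at hS1 hS2
            ext x
            by_cases hx1 : x = q.1
            · subst hx1; simp [hS1.2.1, hS2.2.1]
            by_cases hx2 : x = q.2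
            · subst hx2; simp [hS1.2.2, hS2.2.2]
            constructor
            · intro hxS
              have : x ∈ (S1.erase q.1).erase q.2 := by
                rw [mem_erase, mem_erase]; exact ⟨hx2, hx1, hxS⟩
              simp only [] at heq
              rw [heq, mem_erase, mem_erase] at this
              exact this.2.2
            · intro hxS
              have : x ∈ (S2.erase q.1).erase q.2 := by
                rw [mem_erase, mem_erase]; exact ⟨hx2, hx1, hxS⟩
              simp only [] at heq
              rw [← heq, mem_erase, mem_erase] at this
              exact this.2.2
      _ = (m-2).choose (R-2) := by rw [card_powersetCard, this]
  have step4 : m.choose R ≤ Q.card * ((m-2).choose (R-2)) := by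
    calc m.choose R = P.card := hPcard.symm
      _ ≤ ∑ S ∈ P, (Q.filter (fun q => q.1 ∈ S ∧ q.2 ∈ S)).card := step1
      _ = ∑ q ∈ Q, (P.filter (fun S => q.1 ∈ S ∧ q.2 ∈ S)).card := step2
      _ ≤ ∑ _q ∈ Q, (m-2).choose (R-2) := Finset.sum_le_sum step3
      _ = Q.card * ((m-2).choose (R-2)) := by rw [Finset.sum_const, smul_eq_mul]
  -- the binomial identity m(m-1) C(m-2,R-2) = R(R-1) C(m,R)
  obtain ⟨r2, rfl⟩ : ∃ r2, R = r2 + 2 := ⟨R - 2, by omega⟩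
  obtain ⟨m2, hm2⟩ : ∃ m2, m = m2 + 2 := ⟨m - 2, by omega⟩
  have id1 : (m2+2) * (m2+1).choose (r2+1) = (m2+2).choose (r2+2) * (r2+2) :=
    Nat.add_one_mul_choose_eq (m2+1) (r2+1)
  have id2 : (m2+1) * m2.choose r2 = (m2+1).choose (r2+1) * (r2+1) :=
    Nat.add_one_mul_choose_eq m2 r2
  have key : m * (m-1) * ((m-2).choose ((r2+2)-2))
      = ((r2+2) * ((r2+2)-1)) * (m.choose (r2+2)) := by
    rw [hm2]
    simp only [Nat.add_sub_cancel]
    have h1 : m2 + 2 - 1 = m2 + 1 := by omega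
    rw [h1]
    calc (m2+2) * (m2+1) * m2.choose r2
        = (m2+2) * ((m2+1) * m2.choose r2) := by ring
      _ = (m2+2) * ((m2+1).choose (r2+1) * (r2+1)) := by rw [id2]
      _ = ((m2+2) * (m2+1).choose (r2+1)) * (r2+1) := by ring
      _ = ((m2+2).choose (r2+2) * (r2+2)) * (r2+1) := by rw [id1]
      _ = ((r2+2) * ((r2+2)-1)) * ((m2+2).choose (r2+2)) := by
          have : r2 + 2 - 1 = r2 + 1 := by omega
          rw [this]; ring
  have hchoosepos : 0 < (m-2).choose ((r2+2)-2) := by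
    apply Nat.choose_pos; omega
  have final : m * (m-1) * ((m-2).choose ((r2+2)-2))
      ≤ (Q.card * ((r2+2) * ((r2+2)-1))) * ((m-2).choose ((r2+2)-2)) := by
    rw [key]
    calc ((r2+2) * ((r2+2)-1)) * (m.choose (r2+2))
        ≤ ((r2+2) * ((r2+2)-1)) * (Q.card * ((m-2).choose ((r2+2)-2))) :=
          Nat.mul_le_mul_left _ step4
      _ = (Q.card * ((r2+2) * ((r2+2)-1))) * ((m-2).choose ((r2+2)-2)) := by ring
  exact Nat.le_of_mul_le_mul_right final hchoosepos

private lemma endgame : ∀ l : ℕ, 3 ≤ l → 2916 * (l ^ 6 * (l - 3)) < 25 * 3 ^ (4 * l) := by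
  intro l hl
  induction l, hl using Nat.le_induction with
  | base => norm_num
  | succ n hn ih =>
    by_cases hn4 : n = 3
    · subst hn4; norm_num
    have hn4' : 4 ≤ n := by omega
    have key2 : n + 1 - 3 ≤ 2 * (n - 3) := by omega
    have key1 : 4096 * ((n+1) ^ 6) ≤ 15625 * (n ^ 6) := by
      have h1 : 4 * (n+1) ≤ 5 * n := by omega
      have h2 : (4 * (n+1)) ^ 6 ≤ (5 * n) ^ 6 := Nat.pow_le_pow_left h1 6
      calc 4096 * ((n+1) ^ 6) = (4 * (n+1)) ^ 6 := by rw [mul_pow]; norm_num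
        _ ≤ (5 * n) ^ 6 := h2
        _ = 15625 * (n ^ 6) := by rw [mul_pow]; norm_num
    have c1 : 4096 * (2916 * ((n+1) ^ 6 * (n + 1 - 3)))
        ≤ 31250 * (2916 * (n ^ 6 * (n - 3))) := by
      calc 4096 * (2916 * ((n+1) ^ 6 * (n + 1 - 3)))
          = 2916 * ((4096 * (n+1) ^ 6) * (n + 1 - 3)) := by ring
        _ ≤ 2916 * ((15625 * n ^ 6) * (2 * (n - 3))) :=
            Nat.mul_le_mul le_rfl (Nat.mul_le_mul key1 key2)
        _ = 31250 * (2916 * (n ^ 6 * (n - 3))) := by ring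
    have c2 : 31250 * (2916 * (n ^ 6 * (n - 3))) < 31250 * (25 * 3 ^ (4 * n)) := by
      have h31250 : (0:ℕ) < 31250 := by norm_num
      exact (Nat.mul_lt_mul_left h31250).mpr ih
    have c3 : 31250 * (25 * 3 ^ (4 * n)) ≤ 4096 * (25 * 3 ^ (4 * (n+1))) := by
      have hp : (3:ℕ) ^ (4 * (n+1)) = 81 * 3 ^ (4 * n) := by
        have : 4 * (n + 1) = 4 * n + 4 := by ring
        rw [this, pow_add]; ring
      rw [hp]
      calc 31250 * (25 * 3 ^ (4 * n)) ≤ 331776 * (25 * 3 ^ (4 * n)) :=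
            Nat.mul_le_mul (by norm_num) le_rfl
        _ = 4096 * (25 * (81 * 3 ^ (4 * n))) := by ring
    have h := lt_of_le_of_lt c1 (lt_of_lt_of_le c2 c3)
    exact lt_of_mul_lt_mul_left h (Nat.zero_le 4096)

private lemma arith_close (s l ntc tc m t3 A : ℕ)
    (h1 : 3 ≤ ntc) (h2 : ntc ≤ l) (h3 : ntc + tc = s + 3)
    (h4 : 6 * tc ≤ l ^ 3 * m)
    (hA : A ≤ l + 3)
    (hsup : 3 ^ A ≤ m → m * (m - 1) ≤ t3 * (3 ^ A * (3 ^ A - 1)))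
    (h6 : tc * (s + 2) + t3 ≤ (s + 3) * (s - 1) + l)
    (h7 : 3 ^ (6 * l) ≤ s) (h8 : 2 ≤ s) : False := by
  have hl3 : 3 ≤ l := le_trans h1 h2
  have hlpos : 0 < l := by omega
  have hlpow : l < 3 ^ l := Nat.lt_pow_self (n := l) (by norm_num)
  have h6l : 6 * l < 3 ^ (6 * l) := Nat.lt_pow_self (n := 6 * l) (by norm_num)
  have hcube : l ^ 3 < 3 ^ (3 * l) := by
    calc l ^ 3 < (3 ^ l) ^ 3 := Nat.pow_lt_pow_left hlpow (by norm_num)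
      _ = 3 ^ (3 * l) := by rw [← pow_mul, mul_comm]
  have hmono1 : (3:ℕ) ^ (3 * l) ≤ 3 ^ (6 * l) := Nat.pow_le_pow_right (by norm_num) (by omega)
  have hS4 : 5 * s ≤ l ^ 3 * m := by omega
  have hm2 : 2 ≤ m := by
    rcases Nat.lt_or_ge m 2 with h | h
    · exfalso
      have hle : l ^ 3 * m ≤ l ^ 3 * 1 := Nat.mul_le_mul le_rfl (by omega)
      have e2 : l ^ 3 * 1 = l ^ 3 := by ring
      omega
    · exact h
  have hl3pos : 0 < l ^ 3 := by positivity
  have hRm : 3 ^ A ≤ m := by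
    have e1 : 3 ^ A * l ^ 3 ≤ 3 ^ (l + 3) * 3 ^ (3 * l) :=
      Nat.mul_le_mul (Nat.pow_le_pow_right (by norm_num) hA) (le_of_lt hcube)
    have e2 : (3:ℕ) ^ (l + 3) * 3 ^ (3 * l) = 3 ^ (4 * l + 3) := by
      rw [← pow_add]; congr 1; ring
    have e3 : (3:ℕ) ^ (4 * l + 3) ≤ 3 ^ (6 * l) := Nat.pow_le_pow_right (by norm_num) (by omega)
    have e4 : l ^ 3 * 3 ^ A ≤ l ^ 3 * m := by
      have e5 : l ^ 3 * 3 ^ A = 3 ^ A * l ^ 3 := by ring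
      omega
    exact Nat.le_of_mul_le_mul_left e4 hl3pos
  have hss := hsup hRm
  have e6 : tc * (s + 2) + ntc * (s + 2) = (s + 3) * (s + 2) := by
    rw [← add_mul]
    congr 1
    omega
  have e7 : (s + 3) * (s + 2) = (s + 3) * (s - 1) + 3 * (s + 3) := by
    have h9 : s + 2 = (s - 1) + 3 := by omega
    rw [h9, mul_add]
    ring
  have e8 : ntc * (s + 2) ≤ l * (s + 2) := Nat.mul_le_mul h2 le_rfl
  have e9 : l * (s + 2) + l = l * (s + 3) := by ring
  have e10 : (l - 3) * (s + 3) + 3 * (s + 3) = l * (s + 3) := by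
    rw [← add_mul]
    congr 1
    omega
  have hT3' : t3 ≤ (l - 3) * (s + 3) := by
    clear hsup hss h4 hS4 hm2
    revert h6 e6 e7 e8 e9 e10
    generalize tc * (s + 2) = X1
    generalize ntc * (s + 2) = X2
    generalize (s + 3) * (s + 2) = X3
    generalize (s + 3) * (s - 1) = X4
    generalize l * (s + 2) = X5
    generalize l * (s + 3) = X6
    generalize (l - 3) * (s + 3) = X7
    intro h6 e6 e7 e8 e9 e10
    omega
  have q3 : m * m ≤ 2 * (m * (m - 1)) := by
    obtain ⟨m2, rfl⟩ : ∃ m2, m = m2 + 2 := ⟨m - 2, by omega⟩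
    have h9 : m2 + 2 - 1 = m2 + 1 := by omega
    rw [h9]
    calc (m2 + 2) * (m2 + 2) ≤ (m2 + 2) * (2 * (m2 + 1)) :=
        Nat.mul_le_mul le_rfl (by omega)
      _ = 2 * ((m2 + 2) * (m2 + 1)) := by ring
  have q4 : m * (m - 1) ≤ t3 * (3 ^ A * 3 ^ A) := by
    calc m * (m - 1) ≤ t3 * (3 ^ A * (3 ^ A - 1)) := hss
      _ ≤ t3 * (3 ^ A * 3 ^ A) :=
        Nat.mul_le_mul le_rfl (Nat.mul_le_mul le_rfl (Nat.sub_le _ _))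
  have q5 : (3:ℕ) ^ A * 3 ^ A ≤ 3 ^ (l + 3) * 3 ^ (l + 3) :=
    Nat.mul_le_mul (Nat.pow_le_pow_right (by norm_num) hA)
      (Nat.pow_le_pow_right (by norm_num) hA)
  have q7 : 25 * (s * s) ≤ (2916 * (l ^ 6 * (l - 3)) * 3 ^ (2 * l)) * s := by
    have e : (3:ℕ) ^ (l + 3) * 3 ^ (l + 3) = 729 * 3 ^ (2 * l) := by
      rw [← pow_add]
      have h9 : l + 3 + (l + 3) = 2 * l + 6 := by ring
      rw [h9, pow_add]
      norm_num
      ring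
    calc 25 * (s * s) = (5 * s) * (5 * s) := by ring
      _ ≤ (l ^ 3 * m) * (l ^ 3 * m) := Nat.mul_le_mul hS4 hS4
      _ = (l ^ 3 * l ^ 3) * (m * m) := by ring
      _ ≤ (l ^ 3 * l ^ 3) * (2 * (m * (m - 1))) := Nat.mul_le_mul le_rfl q3
      _ ≤ (l ^ 3 * l ^ 3) * (2 * (t3 * (3 ^ A * 3 ^ A))) :=
          Nat.mul_le_mul le_rfl (Nat.mul_le_mul le_rfl q4)
      _ ≤ (l ^ 3 * l ^ 3) * (2 * (((l - 3) * (s + 3)) * (3 ^ (l + 3) * 3 ^ (l + 3)))) :=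
          Nat.mul_le_mul le_rfl (Nat.mul_le_mul le_rfl (Nat.mul_le_mul hT3' q5))
      _ ≤ (l ^ 3 * l ^ 3) * (2 * (((l - 3) * (2 * s)) * (3 ^ (l + 3) * 3 ^ (l + 3)))) := by
          apply Nat.mul_le_mul le_rfl
          apply Nat.mul_le_mul le_rfl
          apply Nat.mul_le_mul _ le_rfl
          exact Nat.mul_le_mul le_rfl (by omega)
      _ = (2916 * (l ^ 6 * (l - 3)) * 3 ^ (2 * l)) * s := by
          rw [e]
          ring
  have hspos : 0 < s := by omega
  have q8 : 25 * s ≤ 2916 * (l ^ 6 * (l - 3)) * 3 ^ (2 * l) := by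
    have e : 25 * (s * s) = (25 * s) * s := by ring
    rw [e] at q7
    exact Nat.le_of_mul_le_mul_right q7 hspos
  have q9 : 25 * 3 ^ (4 * l) * 3 ^ (2 * l)
      ≤ 2916 * (l ^ 6 * (l - 3)) * 3 ^ (2 * l) := by
    calc 25 * 3 ^ (4 * l) * 3 ^ (2 * l) = 25 * 3 ^ (6 * l) := by
          rw [mul_assoc, ← pow_add]
          congr 2
          ring
      _ ≤ 25 * s := Nat.mul_le_mul le_rfl h7
      _ ≤ _ := q8
  have q10 : 25 * 3 ^ (4 * l) ≤ 2916 * (l ^ 6 * (l - 3)) :=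
    Nat.le_of_mul_le_mul_right q9 (by positivity)
  exact absurd q10 (not_le.mpr (endgame l hl3))

private lemma pair_eq_cases {α : Type*} [DecidableEq α] {a b c d : α} (hab : a ≠ b)
    (h : ({a, b} : Finset α) = {c, d}) : (a = c ∧ b = d) ∨ (a = d ∧ b = c) := by
  have ha : a ∈ ({c, d} : Finset α) := by rw [← h]; simp
  have hb : b ∈ ({c, d} : Finset α) := by rw [← h]; simp
  have hc : c ∈ ({a, b} : Finset α) := by rw [h]; simp
  have hd : d ∈ ({a, b} : Finset α) := by rw [h]; simp
  simp only [mem_insert, mem_singleton] at ha hb hc hd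
  rcases ha with rfl | rfl
  · rcases hb with rfl | rfl
    · exact absurd rfl hab
    · exact Or.inl ⟨rfl, rfl⟩
  · rcases hb with rfl | rfl
    · exact Or.inr ⟨rfl, rfl⟩
    · exact absurd rfl hab

set_option maxHeartbeats 1600000 in
private theorem main_aux (s l : ℕ) (hs2 : 2 ≤ s) (hsl : 3^(6*l) ≤ s)
    (C : Fin ((s + 3) * (s - 1) + l) → Equiv.Perm (Fin (s + 3)))
    (hC : IsSuitableCore ((s + 3) * (s - 1) + l) (s + 3) (2 * s + 1) C) : False := by
  classical
  have hlts : l ≤ s := by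
    have h1 : l < 3 ^ l := Nat.lt_pow_self (n := l) (by norm_num)
    have h2 : (3:ℕ) ^ l ≤ 3 ^ (6*l) := Nat.pow_le_pow_right (by norm_num) (by omega)
    omega
  obtain ⟨p0, hp0⟩ : ∃ p : Fin (s + 3), (p:ℕ) = 0 := ⟨⟨0, by omega⟩, rfl⟩
  obtain ⟨p1, hp1⟩ : ∃ p : Fin (s + 3), (p:ℕ) = 1 := ⟨⟨1, by omega⟩, rfl⟩
  have hp01 : p0 ≠ p1 := by
    intro h; rw [Fin.ext_iff, hp0, hp1] at h; omega
  -- the basic counting consequence of suitability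
  have key : ∀ (σ : Fin (s + 3)) (A : Finset (Fin (s + 3))), σ ∉ A →
      s - 1 + A.card ≤ (univ.filter (fun ρ : Fin ((s + 3) * (s - 1) + l) =>
        ∀ τ : Fin (s + 3), (C ρ).symm τ < (C ρ).symm σ → τ ∈ A)).card := by
    intro σ A hσA
    have hAcard : A.card ≤ s + 2 := by
      have hsub : A ⊆ univ.erase σ := fun x hx =>
        mem_erase.mpr ⟨fun h => hσA (h ▸ hx), mem_univ x⟩
      have := card_le_card hsub
      rw [card_erase_of_mem (mem_univ σ), card_univ, Fintype.card_fin] at this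
      omega
    set T : Finset (Fin (s + 3)) := (insert σ A)ᶜ with hT
    have hσT : σ ∉ T := by
      rw [hT, mem_compl]
      simp
    have hTcard : T.card = s + 2 - A.card := by
      rw [hT, card_compl, card_insert_of_notMem hσA, Fintype.card_fin]
      omega
    have hTlt : T.card < 2 * s + 1 := by omega
    have hkey := hC σ T hσT hTlt
    have heq : (univ.filter (fun i : Fin ((s + 3) * (s - 1) + l) => ∀ τ ∈ T, (C i).symm σ < (C i).symm τ)) =
        (univ.filter (fun ρ : Fin ((s + 3) * (s - 1) + l) =>
          ∀ τ : Fin (s + 3), (C ρ).symm τ < (C ρ).symm σ → τ ∈ A)) := by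
      apply filter_congr
      intro ρ _
      constructor
      · intro h τ hτ
        by_contra hτA
        have hτσ : τ ≠ σ := by
          intro he; subst he; exact lt_irrefl _ hτ
        have hτT : τ ∈ T := by
          rw [hT, mem_compl, mem_insert]
          push_neg
          exact ⟨hτσ, hτA⟩
        exact absurd (h τ hτT) (not_lt.mpr hτ.le)
      · intro h τ hτT
        by_contra hlt
        push_neg at hlt
        rcases eq_or_ne τ σ with rfl | hne
        · exact hσT hτT
        · have hlt2 : (C ρ).symm τ < (C ρ).symm σ :=
            lt_of_le_of_ne hlt (fun he => hne ((C ρ).symm.injective he))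
          have hτA := h τ hlt2
          rw [hT, mem_compl, mem_insert] at hτT
          push_neg at hτT
          exact hτT.2 hτA
    rw [heq] at hkey
    omega
  have hNpos : 0 < (s + 3) * (s - 1) + l := by
    have : 1 * 1 ≤ (s + 3) * (s - 1) := Nat.mul_le_mul (by omega) (by omega)
    omega
  obtain ⟨junk, -⟩ : ∃ ρ : Fin ((s + 3) * (s - 1) + l), True :=
    ⟨⟨0, hNpos⟩, trivial⟩
  set Fr : Fin (s + 3) → Finset (Fin ((s + 3) * (s - 1) + l)) :=
    fun σ => univ.filter (fun ρ => C ρ p0 = σ) with hFr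
  -- empty-prefix characterization
  have hfr_iff : ∀ (ρ : Fin ((s + 3) * (s - 1) + l)) (σ : Fin (s + 3)),
      (∀ τ : Fin (s + 3), (C ρ).symm τ < (C ρ).symm σ → τ ∈ (∅ : Finset (Fin (s + 3))))
      ↔ C ρ p0 = σ := by
    intro ρ σ
    constructor
    · intro h
      by_contra hne
      have h0 : (C ρ).symm (C ρ p0) = p0 := Equiv.symm_apply_apply _ _
      have hlt : (C ρ).symm (C ρ p0) < (C ρ).symm σ := by
        rw [h0, Fin.lt_def, hp0]
        rcases Nat.eq_zero_or_pos ((C ρ).symm σ : ℕ) with h | h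
        · exfalso
          apply hne
          have : (C ρ).symm σ = p0 := by rw [Fin.ext_iff, hp0, h]
          rw [Equiv.symm_apply_eq] at this
          exact this.symm
        · exact h
      exact absurd (h _ hlt) (notMem_empty _)
    · intro h τ hτ
      exfalso
      have : (C ρ).symm σ = p0 := by rw [Equiv.symm_apply_eq]; exact h.symm
      rw [this, Fin.lt_def, hp0] at hτ
      omega
  have hf_lb : ∀ σ : Fin (s + 3), s - 1 ≤ (Fr σ).card := by
    intro σ
    have hk := key σ ∅ (notMem_empty σ)
    rw [card_empty, Nat.add_zero] at hk
    have heq : (univ.filter (fun ρ : Fin ((s + 3) * (s - 1) + l) =>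
        ∀ τ : Fin (s + 3), (C ρ).symm τ < (C ρ).symm σ → τ ∈ (∅ : Finset (Fin (s + 3)))))
        = Fr σ := by
      apply filter_congr
      intro ρ _
      exact iff_of_eq (propext (hfr_iff ρ σ))
    rwa [heq] at hk
  have hsumf : ∑ σ : Fin (s + 3), (Fr σ).card = (s + 3) * (s - 1) + l := by
    have h := card_eq_sum_card_fiberwise
      (f := fun ρ : Fin ((s + 3) * (s - 1) + l) => C ρ p0)
      (s := univ) (t := univ) (fun x _ => mem_univ _)
    rw [card_univ, Fintype.card_fin] at h
    rw [← h]
  -- B σ : symbols x such that no row starts (x, σ, ...)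
  set B : Fin (s + 3) → Finset (Fin (s + 3)) := fun σ =>
    (univ.erase σ).filter (fun x => ∀ ρ, ¬(C ρ p0 = x ∧ C ρ p1 = σ)) with hB
  have key2 : ∀ (σ x : Fin (s + 3)), x ∈ B σ → s ≤ (Fr σ).card := by
    intro σ x hx
    rw [hB, mem_filter, mem_erase] at hx
    obtain ⟨⟨hxσ, -⟩, hnorow⟩ := hx
    have hσx : σ ∉ ({x} : Finset (Fin (s + 3))) := by
      rw [mem_singleton]
      exact fun h => hxσ h.symm
    have hk := key σ {x} hσx
    rw [card_singleton] at hk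
    have hsub : (univ.filter (fun ρ : Fin ((s + 3) * (s - 1) + l) =>
        ∀ τ : Fin (s + 3), (C ρ).symm τ < (C ρ).symm σ → τ ∈ ({x} : Finset (Fin (s + 3)))))
        ⊆ Fr σ := by
      intro ρ hρ
      rw [mem_filter] at hρ
      obtain ⟨-, hρ⟩ := hρ
      rw [hFr, mem_filter]
      refine ⟨mem_univ _, ?_⟩
      by_contra hne
      -- position of σ is ≥ 1
      have h0 : ((C ρ).symm σ : ℕ) ≠ 0 := by
        intro h
        apply hne
        have : (C ρ).symm σ = p0 := by rw [Fin.ext_iff, hp0, h]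
        rw [Equiv.symm_apply_eq] at this
        exact this.symm
      have hfirst : C ρ p0 = x := by
        have hlt : (C ρ).symm (C ρ p0) < (C ρ).symm σ := by
          rw [Equiv.symm_apply_apply, Fin.lt_def, hp0]
          omega
        have := hρ _ hlt
        rwa [mem_singleton] at this
      have h1 : ((C ρ).symm σ : ℕ) ≠ 1 := by
        intro h
        apply hnorow ρ
        refine ⟨hfirst, ?_⟩
        have : (C ρ).symm σ = p1 := by rw [Fin.ext_iff, hp1, h]
        rw [Equiv.symm_apply_eq] at this
        exact this.symm
      -- then position ≥ 2, so second symbol is also x, contradiction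
      have hsecond : C ρ p1 = x := by
        have hlt : (C ρ).symm (C ρ p1) < (C ρ).symm σ := by
          rw [Equiv.symm_apply_apply, Fin.lt_def, hp1]
          omega
        have := hρ _ hlt
        rwa [mem_singleton] at this
      exact hp01 ((C ρ).injective (hfirst.trans hsecond.symm))
    have := card_le_card hsub
    omega
  -- non-tight symbols
  set NT : Finset (Fin (s + 3)) := univ.filter (fun σ => s ≤ (Fr σ).card) with hNT
  have hNTl : NT.card ≤ l := by
    have hpb : ∀ σ : Fin (s + 3),
        (s - 1) + (if s ≤ (Fr σ).card then 1 else 0) ≤ (Fr σ).card := by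
      intro σ
      have := hf_lb σ
      split <;> omega
    have hsum2 : ∑ σ : Fin (s + 3), ((s - 1) + (if s ≤ (Fr σ).card then 1 else 0))
        = (s + 3) * (s - 1) + NT.card := by
      rw [Finset.sum_add_distrib, Finset.sum_const, card_univ, Fintype.card_fin,
        smul_eq_mul, hNT, card_filter]
    have hle := Finset.sum_le_sum (fun σ (_ : σ ∈ univ) => hpb σ)
    rw [hsum2, hsumf] at hle
    have hPP : 0 ≤ (s + 3) * (s - 1) := Nat.zero_le _
    omega
  have hBNT : ∀ (σ x : Fin (s + 3)), x ∈ B σ → σ ∈ NT := by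
    intro σ x hx
    rw [hNT, mem_filter]
    exact ⟨mem_univ _, key2 σ x hx⟩
  -- coverage counting: every symbol is either non-tight or covered thrice
  have hcov : ∀ x : Fin (s + 3),
      s + 2 ≤ (Fr x).card + ((univ.erase x).filter (fun σ => x ∈ B σ)).card := by
    intro x
    have hsplit := card_filter_add_card_filter_not
      (s := univ.erase x) (p := fun σ => x ∈ B σ)
    rw [card_erase_of_mem (mem_univ x), card_univ, Fintype.card_fin] at hsplit
    have hinj : ((univ.erase x).filter (fun σ => ¬ x ∈ B σ)).card ≤ (Fr x).card := by
      have hwit : ∀ σ ∈ (univ.erase x).filter (fun σ => ¬ x ∈ B σ),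
          ∃ ρ, C ρ p0 = x ∧ C ρ p1 = σ := by
        intro σ hσ
        rw [mem_filter, mem_erase] at hσ
        obtain ⟨⟨hσx, -⟩, hnB⟩ := hσ
        rw [hB, mem_filter, mem_erase] at hnB
        push_neg at hnB
        obtain ⟨ρ, hρ⟩ := hnB ⟨Ne.symm hσx, mem_univ x⟩
        exact ⟨ρ, hρ⟩
      set wit : Fin (s + 3) → Fin ((s + 3) * (s - 1) + l) := fun σ =>
        if h : ∃ ρ, C ρ p0 = x ∧ C ρ p1 = σ then h.choose else junk with hwitdef
      apply Finset.card_le_card_of_injOn wit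
      · intro σ hσ
        obtain ⟨ρ, hρ⟩ := hwit σ hσ
        have hex : ∃ ρ, C ρ p0 = x ∧ C ρ p1 = σ := ⟨ρ, hρ⟩
        rw [mem_coe, hFr, mem_filter]
        refine ⟨mem_univ _, ?_⟩
        rw [hwitdef]
        simp only [hex, dif_pos]
        exact hex.choose_spec.1
      · intro σ hσ σ' hσ' heq
        rw [mem_coe] at hσ hσ'
        obtain ⟨ρ, hρ⟩ := hwit σ hσ
        obtain ⟨ρ', hρ'⟩ := hwit σ' hσ'
        have hex : ∃ ρ, C ρ p0 = x ∧ C ρ p1 = σ := ⟨ρ, hρ⟩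
        have hex' : ∃ ρ, C ρ p0 = x ∧ C ρ p1 = σ' := ⟨ρ', hρ'⟩
        have e1 : C (wit σ) p1 = σ := by
          rw [hwitdef]; simp only [hex, dif_pos]; exact hex.choose_spec.2
        have e2 : C (wit σ') p1 = σ' := by
          rw [hwitdef]; simp only [hex', dif_pos]; exact hex'.choose_spec.2
        rw [← e1, ← e2, heq]
    omega
  -- small case: fewer than 3 non-tight symbols is impossible
  by_cases hNT3 : 3 ≤ NT.card
  swap
  · push_neg at hNT3
    have hall : ∀ x : Fin (s + 3), s ≤ (Fr x).card := by
      intro x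
      by_contra hxs
      push_neg at hxs
      have h3 : 3 ≤ ((univ.erase x).filter (fun σ => x ∈ B σ)).card := by
        have := hcov x
        omega
      have hsubNT : (univ.erase x).filter (fun σ => x ∈ B σ) ⊆ NT := by
        intro σ hσ
        rw [mem_filter] at hσ
        exact hBNT σ x hσ.2
      have := card_le_card hsubNT
      omega
    have hNTall : NT = univ := by
      rw [hNT]
      apply filter_true_of_mem
      intro σ _
      exact hall σ
    rw [hNTall, card_univ, Fintype.card_fin] at hNTl
    omega
  -- main case
  set Tight : Finset (Fin (s + 3)) := univ.filter (fun σ => ¬ s ≤ (Fr σ).card) with hTight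
  have hTightNT : NT.card + Tight.card = s + 3 := by
    rw [hNT, hTight, card_filter_add_card_filter_not, card_univ, Fintype.card_fin]
  set coverers : Fin (s + 3) → Finset (Fin (s + 3)) :=
    fun x => (univ.erase x).filter (fun σ => x ∈ B σ) with hcovrs
  have hTcov : ∀ x ∈ Tight, 3 ≤ (coverers x).card := by
    intro x hx
    rw [hTight, mem_filter] at hx
    have := hcov x
    show 3 ≤ ((univ.erase x).filter (fun σ => x ∈ B σ)).card
    omega
  set cfun : Fin (s + 3) → Finset (Fin (s + 3)) := fun x =>
    if h : 3 ≤ (coverers x).card then (Finset.exists_subset_card_eq h).choose else ∅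
    with hcfun
  have hcf : ∀ x ∈ Tight, cfun x ⊆ coverers x ∧ (cfun x).card = 3 := by
    intro x hx
    have h := hTcov x hx
    rw [hcfun]
    simp only [h, dif_pos]
    exact ⟨(Finset.exists_subset_card_eq h).choose_spec.1,
      (Finset.exists_subset_card_eq h).choose_spec.2⟩
  have hcovNT : ∀ x, coverers x ⊆ NT := by
    intro x σ hσ
    rw [hcovrs, mem_filter] at hσ
    exact hBNT σ x hσ.2
  set target := NT.powersetCard 3 with htarget
  have hmaps : ∀ x ∈ Tight, cfun x ∈ target := by
    intro x hx
    rw [htarget, mem_powersetCard]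
    exact ⟨(hcf x hx).1.trans (hcovNT x), (hcf x hx).2⟩
  have htne : target.Nonempty := by
    obtain ⟨t, ht, htc⟩ := Finset.exists_subset_card_eq hNT3
    exact ⟨t, by rw [htarget, mem_powersetCard]; exact ⟨ht, htc⟩⟩
  obtain ⟨T₀, hT₀mem, hT₀max⟩ := Finset.exists_max_image target
    (fun T => (Tight.filter (fun x => cfun x = T)).card) htne
  set Y := Tight.filter (fun x => cfun x = T₀) with hY
  have hfib : Tight.card = ∑ T ∈ target, (Tight.filter (fun x => cfun x = T)).card :=
    card_eq_sum_card_fiberwise hmaps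
  have hTm : Tight.card ≤ target.card * Y.card := by
    rw [hfib]
    calc ∑ T ∈ target, (Tight.filter (fun x => cfun x = T)).card
        ≤ ∑ _T ∈ target, Y.card := Finset.sum_le_sum (fun T hT => hT₀max T hT)
      _ = target.card * Y.card := by rw [Finset.sum_const, smul_eq_mul]
  have htarget6 : 6 * target.card ≤ l ^ 3 := by
    rw [htarget, card_powersetCard]
    have h1 : 6 * (NT.card.choose 3) = NT.card.descFactorial 3 := by
      rw [Nat.descFactorial_eq_factorial_mul_choose]
      norm_num [Nat.factorial]
    rw [h1]
    calc NT.card.descFactorial 3 ≤ NT.card ^ 3 := Nat.descFactorial_le_pow _ _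
      _ ≤ l ^ 3 := Nat.pow_le_pow_left hNTl 3
  have hT₀' : T₀ ⊆ NT ∧ T₀.card = 3 := by
    have h := hT₀mem
    rw [htarget, mem_powersetCard] at h
    exact h
  obtain ⟨σ1, σ2, σ3, h12, h13, h23, hT₀eq⟩ := Finset.card_eq_three.mp hT₀'.2
  have hYB : ∀ x ∈ Y, ∀ σ ∈ T₀, x ∈ B σ := by
    intro x hx σ hσ
    rw [hY, mem_filter] at hx
    obtain ⟨hxT, hxc⟩ := hx
    have hsub := (hcf x hxT).1
    rw [hxc] at hsub
    have hmem := hsub hσ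
    rw [hcovrs, mem_filter] at hmem
    exact hmem.2
  have hYTight : Y ⊆ Tight := by rw [hY]; exact filter_subset _ _
  have hσNT : ∀ σ ∈ T₀, s ≤ (Fr σ).card := by
    intro σ hσ
    have := hT₀'.1 hσ
    rw [hNT, mem_filter] at this
    exact this.2
  have hσY : ∀ σ ∈ T₀, σ ∉ Y := by
    intro σ hσ hσY
    have h1 := hYTight hσY
    rw [hTight, mem_filter] at h1
    exact h1.2 (hσNT σ hσ)
  -- coverage lemma: each coverer must appear just after a small prefix inside A
  have cov3 : ∀ σ' ∈ T₀, ∀ A ⊆ Y, A.card = (Fr σ').card + 2 - s →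
      ∃ ρ : Fin ((s + 3) * (s - 1) + l), 2 ≤ ((C ρ).symm σ' : ℕ) ∧
        (∀ τ : Fin (s + 3), (C ρ).symm τ < (C ρ).symm σ' → τ ∈ A) := by
    intro σ' hσ' A hAY hAcard
    have hfσ : s ≤ (Fr σ').card := hσNT σ' hσ'
    have hσA : σ' ∉ A := fun h => hσY σ' hσ' (hAY h)
    have hk := key σ' A hσA
    by_contra hno
    push_neg at hno
    have hsub : (univ.filter (fun ρ : Fin ((s + 3) * (s - 1) + l) =>
        ∀ τ : Fin (s + 3), (C ρ).symm τ < (C ρ).symm σ' → τ ∈ A)) ⊆ Fr σ' := by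
      intro ρ hρ
      rw [mem_filter] at hρ
      obtain ⟨-, hρ⟩ := hρ
      rw [hFr, mem_filter]
      refine ⟨mem_univ _, ?_⟩
      by_contra hne
      have h0 : ((C ρ).symm σ' : ℕ) ≠ 0 := by
        intro h
        apply hne
        have h' : (C ρ).symm σ' = p0 := by rw [Fin.ext_iff, hp0, h]
        rw [Equiv.symm_apply_eq] at h'
        exact h'.symm
      have h2 : ¬ 2 ≤ ((C ρ).symm σ' : ℕ) := by
        intro h2
        obtain ⟨τ, hτ1, hτ2⟩ := hno ρ h2
        exact hτ2 (hρ τ hτ1)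
      have hfirst : C ρ p0 ∈ A := by
        apply hρ
        rw [Equiv.symm_apply_apply, Fin.lt_def, hp0]
        omega
      have hsecond : C ρ p1 = σ' := by
        have h' : (C ρ).symm σ' = p1 := by rw [Fin.ext_iff, hp1]; omega
        rw [Equiv.symm_apply_eq] at h'
        exact h'.symm
      have hxB := hYB _ (hAY hfirst) σ' hσ'
      rw [hB, mem_filter] at hxB
      exact hxB.2 ρ ⟨rfl, hsecond⟩
    have hcard := card_le_card hsub
    omega
  -- the "early pair" relations
  set inH : Fin (s + 3) → Fin (s + 3) → Fin (s + 3) → Prop := fun σ' u v =>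
    ∃ ρ : Fin ((s + 3) * (s - 1) + l), 2 ≤ ((C ρ).symm σ' : ℕ) ∧
      (∀ τ : Fin (s + 3), (C ρ).symm τ < (C ρ).symm σ' → τ ∈ Y) ∧
      ({C ρ p0, C ρ p1} : Finset (Fin (s + 3))) = {u, v} with hinH
  have hinH_symm : ∀ σ' u v, inH σ' u v → inH σ' v u := by
    rintro σ' u v ⟨ρ, h1, h2, h3⟩
    exact ⟨ρ, h1, h2, by rw [h3, pair_comm]⟩
  set χ : Fin (s + 3) → Fin (s + 3) → Fin 3 := fun u v =>
    if ¬ inH σ1 u v then 0 else if ¬ inH σ2 u v then 1 else 2 with hχ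
  have hχsymm : ∀ u v, χ u v = χ v u := by
    intro u v
    have e1 : inH σ1 u v ↔ inH σ1 v u := ⟨hinH_symm _ _ _, hinH_symm _ _ _⟩
    have e2 : inH σ2 u v ↔ inH σ2 v u := ⟨hinH_symm _ _ _, hinH_symm _ _ _⟩
    rw [hχ]
    simp only [e1, e2]
  set common : Finset (Fin (s + 3) × Fin (s + 3)) := (Y ×ˢ Y).filter
    (fun p => p.1 < p.2 ∧ inH σ1 p.1 p.2 ∧ inH σ2 p.1 p.2 ∧ inH σ3 p.1 p.2) with hcommon
  set a1 := (Fr σ1).card + 2 - s with ha1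
  set a2 := (Fr σ2).card + 2 - s with ha2
  set a3 := (Fr σ3).card + 2 - s with ha3
  have hT1 : σ1 ∈ T₀ := by rw [hT₀eq]; simp
  have hT2 : σ2 ∈ T₀ := by rw [hT₀eq]; simp
  have hT3 : σ3 ∈ T₀ := by rw [hT₀eq]; simp
  -- witness extraction
  have hwit : ∀ σ' ∈ T₀, ∀ A ⊆ Y, A.card = (Fr σ').card + 2 - s →
      ∃ u ∈ A, ∃ v ∈ A, u ≠ v ∧ inH σ' u v := by
    intro σ' hσ' A hAY hAcard
    obtain ⟨ρ, hρ2, hρsub⟩ := cov3 σ' hσ' A hAY hAcard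
    refine ⟨C ρ p0, ?_, C ρ p1, ?_, ?_, ρ, hρ2, ?_, rfl⟩
    · apply hρsub
      rw [Equiv.symm_apply_apply, Fin.lt_def, hp0]
      omega
    · apply hρsub
      rw [Equiv.symm_apply_apply, Fin.lt_def, hp1]
      omega
    · intro h
      exact hp01 ((C ρ).injective h)
    · intro τ hτ
      exact hAY (hρsub τ hτ)
  have hcoverR : ∀ S, S ⊆ Y → S.card = 3 ^ (a1 + a2 + a3) →
      ∃ q ∈ common, q.1 ∈ S ∧ q.2 ∈ S := by
    intro S hSY hScard
    by_contra hno
    push_neg at hno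
    obtain ⟨K, hKS, hK⟩ := ramsey3 (a1 + a2 + a3) a1 a2 a3 rfl S χ hχsymm
      (le_of_eq hScard.symm)
    rcases hK with ⟨hKcard, hmono⟩ | ⟨hKcard, hmono⟩ | ⟨hKcard, hmono⟩
    · obtain ⟨u, hu, v, hv, huv, hH⟩ := hwit σ1 hT1 K (hKS.trans hSY) (ha1 ▸ hKcard)
      have hcol := hmono u hu v hv huv
      rw [hχ] at hcol
      by_cases h1 : inH σ1 u v
      · simp only [h1, not_true_eq_false, if_false] at hcol
        split at hcol <;> exact absurd hcol (by decide)
      · exact h1 hH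
    · obtain ⟨u, hu, v, hv, huv, hH⟩ := hwit σ2 hT2 K (hKS.trans hSY) (ha2 ▸ hKcard)
      have hcol := hmono u hu v hv huv
      rw [hχ] at hcol
      by_cases h1 : inH σ1 u v
      · simp only [h1, not_true_eq_false, if_false] at hcol
        by_cases h2 : inH σ2 u v
        · simp only [h2, not_true_eq_false, if_false] at hcol
          exact absurd hcol (by decide)
        · exact h2 hH
      · simp only [h1, not_false_eq_true, if_true] at hcol
        exact absurd hcol (by decide)
    · obtain ⟨u, hu, v, hv, huv, hH⟩ := hwit σ3 hT3 K (hKS.trans hSY) (ha3 ▸ hKcard)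
      have hcol := hmono u hu v hv huv
      rw [hχ] at hcol
      by_cases h1 : inH σ1 u v
      swap
      · simp only [h1, not_false_eq_true, if_true] at hcol
        exact absurd hcol (by decide)
      by_cases h2 : inH σ2 u v
      swap
      · simp only [h1, not_true_eq_false, if_false, h2, not_false_eq_true, if_true] at hcol
        exact absurd hcol (by decide)
      -- all three relations hold on {u, v}
      have huY : u ∈ Y := hSY (hKS hu)
      have hvY : v ∈ Y := hSY (hKS hv)
      rcases lt_or_gt_of_ne huv with hlt | hlt
      · refine absurd ((hno (u, v) ?_) (hKS hu)) (by simpa using hKS hv)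
        rw [hcommon, mem_filter, mem_product]
        exact ⟨⟨huY, hvY⟩, hlt, h1, h2, hH⟩
      · refine absurd ((hno (v, u) ?_) (hKS hv)) (by simpa using hKS hu)
        rw [hcommon, mem_filter, mem_product]
        exact ⟨⟨hvY, huY⟩, hlt, hinH_symm _ _ _ h1, hinH_symm _ _ _ h2, hinH_symm _ _ _ hH⟩
  -- needed pairs: realized ordered (first,second) pairs
  set needed : Finset (Fin (s + 3) × Fin (s + 3)) := (univ ×ˢ univ).filter
    (fun p => p.1 ≠ p.2 ∧ ∃ ρ, C ρ p0 = p.1 ∧ C ρ p1 = p.2) with hneeded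
  have hneeded_lb : Tight.card * (s + 2) ≤ needed.card := by
    have hfib2 : needed.card = ∑ τ : Fin (s + 3), (needed.filter (fun p => p.2 = τ)).card :=
      card_eq_sum_card_fiberwise (f := Prod.snd) (t := univ) (fun x _ => mem_univ _)
    have hterm : ∀ τ ∈ Tight, s + 2 ≤ (needed.filter (fun p => p.2 = τ)).card := by
      intro τ hτ
      rw [hTight, mem_filter] at hτ
      have hBempty : ∀ x : Fin (s + 3), x ≠ τ → ∃ ρ, C ρ p0 = x ∧ C ρ p1 = τ := by
        intro x hxτ
        by_contra hnor
        push_neg at hnor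
        have hxB : x ∈ B τ := by
          rw [hB, mem_filter, mem_erase]
          exact ⟨⟨hxτ, mem_univ _⟩, fun ρ h => hnor ρ h.1 h.2⟩
        exact hτ.2 (key2 τ x hxB)
      have hinj : (univ.erase τ).card ≤ (needed.filter (fun p => p.2 = τ)).card := by
        apply card_le_card_of_injOn (fun x => (x, τ))
        · intro x hx
          rw [mem_coe, mem_erase] at hx
          rw [mem_coe, mem_filter, hneeded, mem_filter, mem_product]
          exact ⟨⟨⟨mem_univ _, mem_univ _⟩, hx.1, hBempty x hx.1⟩, rfl⟩
        · intro x _ x' _ h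
          exact congrArg Prod.fst h
      rw [card_erase_of_mem (mem_univ τ), card_univ, Fintype.card_fin] at hinj
      omega
    calc Tight.card * (s + 2) = ∑ _τ ∈ Tight, (s + 2) := by
          rw [Finset.sum_const, smul_eq_mul]
      _ ≤ ∑ τ ∈ Tight, (needed.filter (fun p => p.2 = τ)).card :=
          Finset.sum_le_sum hterm
      _ ≤ ∑ τ : Fin (s + 3), (needed.filter (fun p => p.2 = τ)).card :=
          Finset.sum_le_sum_of_subset (subset_univ _)
      _ = needed.card := hfib2.symm
  -- witnesses for needed pairs
  set witN : Fin (s + 3) × Fin (s + 3) → Fin ((s + 3) * (s - 1) + l) := fun p =>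
    if h : ∃ ρ, C ρ p0 = p.1 ∧ C ρ p1 = p.2 then h.choose else junk with hwitN
  have hwitNs : ∀ p : Fin (s + 3) × Fin (s + 3), (∃ ρ, C ρ p0 = p.1 ∧ C ρ p1 = p.2) →
      C (witN p) p0 = p.1 ∧ C (witN p) p1 = p.2 := by
    intro p h
    rw [hwitN]
    simp only [h, dif_pos]
    exact h.choose_spec
  -- extra witnesses for common pairs
  have hwitC : ∀ q ∈ common, ∃ ρ : Fin ((s + 3) * (s - 1) + l),
      ({C ρ p0, C ρ p1} : Finset (Fin (s + 3))) = {q.1, q.2} ∧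
      ρ ≠ witN (q.1, q.2) ∧ ρ ≠ witN (q.2, q.1) := by
    intro q hq
    rw [hcommon, mem_filter] at hq
    obtain ⟨hqY, hqlt, hH1, hH2, hH3⟩ := hq
    obtain ⟨r1, hr11, hr12, hr13⟩ := hH1
    obtain ⟨r2, hr21, hr22, hr23⟩ := hH2
    obtain ⟨r3, hr31, hr32, hr33⟩ := hH3
    have hdis : ∀ σa ∈ T₀, ∀ σb ∈ T₀, σa ≠ σb →
        ∀ ρ : Fin ((s + 3) * (s - 1) + l),
        (∀ τ : Fin (s + 3), (C ρ).symm τ < (C ρ).symm σa → τ ∈ Y) →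
        (∀ τ : Fin (s + 3), (C ρ).symm τ < (C ρ).symm σb → τ ∈ Y) → False := by
      intro σa ha σb hb hab ρ hpa hpb
      have hne2 : (C ρ).symm σa ≠ (C ρ).symm σb :=
        fun h => hab ((C ρ).symm.injective h)
      rcases lt_or_gt_of_ne hne2 with h | h
      · exact hσY σa ha (hpb σa h)
      · exact hσY σb hb (hpa σb h)
    have d12 : r1 ≠ r2 := by
      intro h
      exact hdis σ1 hT1 σ2 hT2 h12 r1 hr12 (by rw [h]; exact hr22)
    have d13 : r1 ≠ r3 := by
      intro h
      exact hdis σ1 hT1 σ3 hT3 h13 r1 hr12 (by rw [h]; exact hr32)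
    have d23 : r2 ≠ r3 := by
      intro h
      exact hdis σ2 hT2 σ3 hT3 h23 r2 hr22 (by rw [h]; exact hr32)
    set w1 := witN (q.1, q.2) with hw1
    set w2 := witN (q.2, q.1) with hw2
    have hpick : (r1 ≠ w1 ∧ r1 ≠ w2) ∨ (r2 ≠ w1 ∧ r2 ≠ w2) ∨ (r3 ≠ w1 ∧ r3 ≠ w2) := by
      by_contra hcon
      push_neg at hcon
      obtain ⟨hc1, hc2, hc3⟩ := hcon
      rcases eq_or_ne r1 w1 with e1 | e1
      · rcases eq_or_ne r2 w1 with e2 | e2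
        · exact d12 (e1.trans e2.symm)
        · rcases eq_or_ne r3 w1 with e3 | e3
          · exact d13 (e1.trans e3.symm)
          · exact d23 ((hc2 e2).trans (hc3 e3).symm)
      · have e1' := hc1 e1
        rcases eq_or_ne r2 w2 with e2 | e2
        · exact d12 (e1'.trans e2.symm)
        · have e2' : r2 = w1 := by
            rcases eq_or_ne r2 w1 with h | h
            · exact h
            · exact absurd (hc2 h) e2
          rcases eq_or_ne r3 w2 with e3 | e3
          · exact d13 (e1'.trans e3.symm)
          · have e3' : r3 = w1 := by
              rcases eq_or_ne r3 w1 with h | h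
              · exact h
              · exact absurd (hc3 h) e3
            exact d23 (e2'.trans e3'.symm)
    rcases hpick with ⟨ha, hb⟩ | ⟨ha, hb⟩ | ⟨ha, hb⟩
    · exact ⟨r1, hr13, ha, hb⟩
    · exact ⟨r2, hr23, ha, hb⟩
    · exact ⟨r3, hr33, ha, hb⟩
  set witC : Fin (s + 3) × Fin (s + 3) → Fin ((s + 3) * (s - 1) + l) := fun q =>
    if hq : q ∈ common then (hwitC q hq).choose else junk with hwitCdef
  have hwitCs : ∀ q ∈ common,
      ({C (witC q) p0, C (witC q) p1} : Finset (Fin (s + 3))) = {q.1, q.2} ∧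
      witC q ≠ witN (q.1, q.2) ∧ witC q ≠ witN (q.2, q.1) := by
    intro q hq
    rw [hwitCdef]
    simp only [hq, dif_pos]
    exact (hwitC q hq).choose_spec
  -- the grand injection
  have hcost : needed.card + common.card ≤ (s + 3) * (s - 1) + l := by
    have h1 : (needed.disjSum common).card ≤
        (univ : Finset (Fin ((s + 3) * (s - 1) + l))).card := by
      apply card_le_card_of_injOn (Sum.elim witN witC)
      · intro x _
        exact mem_univ _
      · intro x hx y hy hxy
        rw [mem_coe] at hx hy
        have hfst : ∀ p : Fin (s + 3) × Fin (s + 3), p ∈ needed →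
            C (witN p) p0 = p.1 ∧ C (witN p) p1 = p.2 := by
          intro p hp
          rw [hneeded, mem_filter] at hp
          exact hwitNs p hp.2.2
        rcases x with p | q <;> rcases y with p' | q'
        · have hpn : p ∈ needed := inl_mem_disjSum.mp hx
          have hpn' : p' ∈ needed := inl_mem_disjSum.mp hy
          simp only [Sum.elim_inl] at hxy
          have s1 := hfst p hpn
          have s2 := hfst p' hpn'
          congr 1
          have e1 : p.1 = p'.1 := by rw [← s1.1, ← s2.1, hxy]
          have e2 : p.2 = p'.2 := by rw [← s1.2, ← s2.2, hxy]
          exact Prod.ext e1 e2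
        · exfalso
          have hpn : p ∈ needed := inl_mem_disjSum.mp hx
          have hqc : q' ∈ common := inr_mem_disjSum.mp hy
          simp only [Sum.elim_inl, Sum.elim_inr] at hxy
          have s1 := hfst p hpn
          have s2 := hwitCs q' hqc
          have hpne : p.1 ≠ p.2 := by
            rw [hneeded, mem_filter] at hpn
            exact hpn.2.1
          have hCne : C (witC q') p0 ≠ C (witC q') p1 :=
            fun h => hp01 ((C (witC q')).injective h)
          have hpair : ({C (witC q') p0, C (witC q') p1} : Finset (Fin (s + 3)))
              = {q'.1, q'.2} := s2.1
          have hpq : ({p.1, p.2} : Finset (Fin (s + 3))) = {q'.1, q'.2} := by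
            rw [← hpair, ← s1.1, ← s1.2, hxy]
          rcases pair_eq_cases hpne hpq with ⟨e1, e2⟩ | ⟨e1, e2⟩
          · have : p = (q'.1, q'.2) := Prod.ext e1 e2
            rw [this] at hxy
            exact s2.2.1 hxy.symm
          · have : p = (q'.2, q'.1) := Prod.ext e1 e2
            rw [this] at hxy
            exact s2.2.2 hxy.symm
        · exfalso
          have hpn : p' ∈ needed := inl_mem_disjSum.mp hy
          have hqc : q ∈ common := inr_mem_disjSum.mp hx
          simp only [Sum.elim_inl, Sum.elim_inr] at hxy
          have s1 := hfst p' hpn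
          have s2 := hwitCs q hqc
          have hpne : p'.1 ≠ p'.2 := by
            rw [hneeded, mem_filter] at hpn
            exact hpn.2.1
          have hpair : ({C (witC q) p0, C (witC q) p1} : Finset (Fin (s + 3)))
              = {q.1, q.2} := s2.1
          have hpq : ({p'.1, p'.2} : Finset (Fin (s + 3))) = {q.1, q.2} := by
            rw [← hpair, ← s1.1, ← s1.2, hxy]
          rcases pair_eq_cases hpne hpq with ⟨e1, e2⟩ | ⟨e1, e2⟩
          · have : p' = (q.1, q.2) := Prod.ext e1 e2
            rw [this] at hxy
            exact s2.2.1 hxy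
          · have : p' = (q.2, q.1) := Prod.ext e1 e2
            rw [this] at hxy
            exact s2.2.2 hxy
        · have hqc : q ∈ common := inr_mem_disjSum.mp hx
          have hqc' : q' ∈ common := inr_mem_disjSum.mp hy
          simp only [Sum.elim_inr] at hxy
          have s1 := hwitCs q hqc
          have s2 := hwitCs q' hqc'
          have hCne : C (witC q) p0 ≠ C (witC q) p1 :=
            fun h => hp01 ((C (witC q)).injective h)
          have hqq : ({q.1, q.2} : Finset (Fin (s + 3))) = {q'.1, q'.2} := by
            rw [← s1.1, ← s2.1, hxy]
          have hqlt : q.1 < q.2 := by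
            rw [hcommon, mem_filter] at hqc
            exact hqc.2.1
          have hqlt' : q'.1 < q'.2 := by
            rw [hcommon, mem_filter] at hqc'
            exact hqc'.2.1
          have hqne : q.1 ≠ q.2 := ne_of_lt hqlt
          congr 1
          rcases pair_eq_cases hqne hqq with ⟨e1, e2⟩ | ⟨e1, e2⟩
          · exact Prod.ext e1 e2
          · exfalso
            rw [e1, e2] at hqlt
            exact absurd hqlt (not_lt.mpr (le_of_lt hqlt'))
    rw [card_disjSum, card_univ, Fintype.card_fin] at h1
    exact h1
  -- assemble the final numeric contradiction
  have hQmem : ∀ q ∈ common, q.1 ∈ Y ∧ q.2 ∈ Y ∧ q.1 ≠ q.2 := by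
    intro q hq
    rw [hcommon, mem_filter, mem_product] at hq
    exact ⟨hq.1.1, hq.1.2, ne_of_lt hq.2.1⟩
  have hf1 := hσNT σ1 hT1
  have hf2 := hσNT σ2 hT2
  have hf3 := hσNT σ3 hT3
  have hApos : a1 + a2 + a3 ≠ 0 := by omega
  have hsup : 3 ^ (a1 + a2 + a3) ≤ Y.card →
      Y.card * (Y.card - 1) ≤ common.card * (3 ^ (a1 + a2 + a3) * (3 ^ (a1 + a2 + a3) - 1)) := by
    intro hRm
    refine supersat Y (3 ^ (a1 + a2 + a3)) ?_ hRm common hQmem hcoverR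
    have := Nat.one_lt_pow hApos (show 1 < 3 by norm_num)
    omega
  have hS1 : 6 * Tight.card ≤ l ^ 3 * Y.card := by
    calc 6 * Tight.card ≤ 6 * (target.card * Y.card) := Nat.mul_le_mul le_rfl hTm
      _ = (6 * target.card) * Y.card := by ring
      _ ≤ l ^ 3 * Y.card := Nat.mul_le_mul htarget6 le_rfl
  -- bound on a1 + a2 + a3
  have hRsum : a1 + a2 + a3 ≤ l + 3 := by
    have hsd := Finset.sum_sdiff (f := fun σ => (Fr σ).card) (subset_univ T₀)
    have hT₀sum : ∑ σ ∈ T₀, (Fr σ).card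
        = (Fr σ1).card + ((Fr σ2).card + (Fr σ3).card) := by
      rw [hT₀eq, Finset.sum_insert (by simp [h12, h13]),
        Finset.sum_insert (by simp [h23]), Finset.sum_singleton]
    have hcard_sd : (univ \ T₀).card = s := by
      rw [card_sdiff_of_subset (subset_univ _), card_univ, Fintype.card_fin, hT₀'.2]
      omega
    have hlow : s * (s - 1) ≤ ∑ σ ∈ univ \ T₀, (Fr σ).card := by
      calc s * (s - 1) = (univ \ T₀).card * (s - 1) := by rw [hcard_sd]
        _ = (univ \ T₀).card • (s - 1) := by rw [smul_eq_mul]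
        _ ≤ ∑ σ ∈ univ \ T₀, (Fr σ).card :=
            Finset.card_nsmul_le_sum _ _ _ (fun σ _ => hf_lb σ)
    have hprod1 : (s + 3) * (s - 1) = s * (s - 1) + 3 * (s - 1) := by ring
    have hsd' : ∑ x ∈ univ \ T₀, (Fr x).card + ∑ x ∈ T₀, (Fr x).card
        = ∑ x : Fin (s + 3), (Fr x).card := hsd
    have hT₀sum' : ∑ x ∈ T₀, (Fr x).card
        = (Fr σ1).card + ((Fr σ2).card + (Fr σ3).card) := hT₀sum
    rw [hsumf, hT₀sum'] at hsd'
    omega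
  have h6' : Tight.card * (s + 2) + common.card ≤ (s + 3) * (s - 1) + l := by omega
  exact arith_close s l NT.card Tight.card Y.card common.card (a1 + a2 + a3)
    hNT3 hNTl hTightNT hS1 hRsum hsup h6' hsl hs2

/-- For all sufficiently large `s` and any `l = l(s) ≤ ln s / (6 ln 3)`, there is no
`((s+3)(s−1)+l, s+3, 2s+1)`-suitable core. -/
theorem stmt13 :
    ∃ s₀ : ℕ, ∀ s : ℕ, s₀ ≤ s → ∀ l : ℕ, (l : ℝ) ≤ Real.log s / (6 * Real.log 3) →
      ¬ SuitableCoreExists ((s + 3) * (s - 1) + l) (s + 3) (2 * s + 1) := by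
  refine ⟨2, ?_⟩
  intro s hs l hl hex
  obtain ⟨C, hC⟩ := hex
  have hlog3 : (0:ℝ) < Real.log 3 := Real.log_pos (by norm_num)
  have hsl : (3:ℕ) ^ (6 * l) ≤ s := by
    have h1 : (l : ℝ) * (6 * Real.log 3) ≤ Real.log s :=
      (le_div_iff₀ (by positivity)).mp hl
    have h2 : Real.log ((3:ℝ) ^ (6 * l)) ≤ Real.log s := by
      rw [Real.log_pow]
      push_cast
      nlinarith [hlog3]
    have hspos : (0:ℝ) < (s:ℝ) := by
      have : (0:ℕ) < s := by omega
      exact_mod_cast this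
    have h3 : ((3:ℝ) ^ (6 * l)) ≤ (s : ℝ) :=
      (Real.log_le_log_iff (by positivity) hspos).mp h2
    exact_mod_cast h3
  exact main_aux s l (by omega) hsl C hC
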